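/- arXiv:2305.19372 — 4 statements merged into one kernel-verified Lean document; each statement's English description precedes it below -/
import Mathlib

section
/- If Y is a square-integrable random variable taking values in the lattice {v₀ + Dk : k ∈ ℤ} with variance σ², then σ² ≥ (D²/4)·θ_Y, where θ_Y := Σ_{k∈ℤ} min(P(Y = v₀+Dk), P(Y = v₀+D(k+1))). -/
open MeasureTheory

theorem variance_ge_theta {Ω : Type*} [MeasurableSpace Ω] (P : Measure Ω) [IsProbabilityMeasure P]
    (Y : Ω → ℝ) (hY : Measurable Y) (hL2 : MemLp Y 2 P) (v₀ D : ℝ) (hD : 0 < D)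
    (hlat : P {ω | ∃ k : ℤ, Y ω = v₀ + D * k} = 1) :
    ProbabilityTheory.variance Y P ≥
      D ^ 2 / 4 * ∑' k : ℤ, min (P {ω | Y ω = v₀ + D * k}).toReal
        (P {ω | Y ω = v₀ + D * (k + 1)}).toReal := by
  classical
  set μ := ∫ ω, Y ω ∂P with hμ
  set g : Ω → ℝ := fun ω => (Y ω - μ) ^ 2 with hg
  set A : ℤ → Set Ω := fun k => {ω | Y ω = v₀ + D * k} with hA
  set f : ℤ → ℝ := fun k => (P (A k)).toReal with hf
  set c : ℤ → ℝ := fun k => (v₀ + D * k - μ) ^ 2 with hc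
  have hAm : ∀ k, MeasurableSet (A k) := fun k => hY (measurableSet_singleton _)
  have hdisj : Pairwise (Function.onFun Disjoint A) := by
    intro i j hij
    simp only [Function.onFun, Set.disjoint_left]
    intro ω hi hj
    apply hij
    have h1 : Y ω = v₀ + D * i := hi
    have h2 : Y ω = v₀ + D * j := hj
    have h3 : (i : ℝ) = (j : ℝ) := by
      have : D * i = D * j := by linarith
      exact mul_left_cancel₀ hD.ne' this
    exact_mod_cast h3
  have hgnn : ∀ ω, 0 ≤ g ω := fun ω => sq_nonneg _
  have hgint : Integrable g P := by
    have := (hL2.sub (memLp_const μ)).integrable_sq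
    simpa [hg, Pi.sub_apply] using this
  -- sum of set integrals
  have hHS : HasSum (fun k => ∫ ω in A k, g ω ∂P) (∫ ω in ⋃ k, A k, g ω ∂P) :=
    hasSum_integral_iUnion hAm hdisj hgint.integrableOn
  have hset : ∀ k, ∫ ω in A k, g ω ∂P = f k * c k := by
    intro k
    have : ∫ ω in A k, g ω ∂P = ∫ _ω in A k, c k ∂P := by
      apply setIntegral_congr_fun (hAm k)
      intro ω hω
      have : Y ω = v₀ + D * k := hω
      simp [hg, hc, this]
    rw [this, setIntegral_const, smul_eq_mul]
    rfl
  have hHS2 : HasSum (fun k => f k * c k) (∫ ω in ⋃ k, A k, g ω ∂P) := by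
    simpa only [hset] using hHS
  have hfcnn : ∀ k, 0 ≤ f k * c k := fun k =>
    mul_nonneg ENNReal.toReal_nonneg (sq_nonneg _)
  have hle1 : ∫ ω in ⋃ k, A k, g ω ∂P ≤ ProbabilityTheory.variance Y P := by
    have hvar : ProbabilityTheory.variance Y P = ∫ ω, g ω ∂P := by
      rw [ProbabilityTheory.variance_eq_integral hL2.aemeasurable]
    rw [hvar]
    exact setIntegral_le_integral hgint (Filter.Eventually.of_forall hgnn)
  -- summability of f
  have hfsum : Summable f := by
    apply ENNReal.summable_toReal
    have : ∑' k, P (A k) = P (⋃ k, A k) := (measure_iUnion hdisj hAm).symm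
    rw [this]
    exact ne_top_of_le_ne_top (by simp) (measure_mono (Set.subset_univ _))
  -- combinatorial step
  set m : ℤ := ⌊(μ - v₀) / D + 1 / 2⌋ with hm
  set ι : ℤ → ℤ := fun k => if k < m then k else k + 1 with hι
  have hιinj : Function.Injective ι := by
    intro a b hab
    simp only [hι] at hab
    split_ifs at hab <;> omega
  have hfloor1 : (m : ℝ) ≤ (μ - v₀) / D + 1 / 2 := Int.floor_le _
  have hfloor2 : (μ - v₀) / D + 1 / 2 < (m : ℝ) + 1 := Int.lt_floor_add_one _
  have hDpos : (0:ℝ) < D := hD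
  have key : ∀ k : ℤ, min (f k) (f (k + 1)) * (D ^ 2 / 4) ≤ f (ι k) * c (ι k) := by
    intro k
    by_cases hk : k < m
    · have hικ : ι k = k := by simp [hι, hk]
      rw [hικ]
      have hkm : (k : ℝ) ≤ (m : ℝ) - 1 := by
        have : k ≤ m - 1 := by omega
        exact_mod_cast this
      have hxk : v₀ + D * k ≤ μ - D / 2 := by
        have h1 : (k : ℝ) ≤ (μ - v₀) / D - 1 / 2 := by linarith
        have h2 : D * (k : ℝ) ≤ D * ((μ - v₀) / D - 1 / 2) :=
          mul_le_mul_of_nonneg_left h1 hDpos.le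
        have h3 : D * ((μ - v₀) / D) = μ - v₀ := by field_simp
        nlinarith
      have hck : D ^ 2 / 4 ≤ c k := by
        have : D / 2 ≤ μ - (v₀ + D * k) := by linarith
        have h4 : (D / 2) ^ 2 ≤ (μ - (v₀ + D * k)) ^ 2 := by
          apply sq_le_sq' <;> nlinarith
        simp only [hc]
        nlinarith
      exact mul_le_mul (min_le_left _ _) hck (by positivity) ENNReal.toReal_nonneg
    · have hικ : ι k = k + 1 := by simp [hι, hk]
      rw [hικ]
      have hkm : (m : ℝ) + 1 ≤ ((k : ℝ) + 1) := by
        have : m + 1 ≤ k + 1 := by omega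
        exact_mod_cast this
      have hxk : μ + D / 2 ≤ v₀ + D * ((k : ℝ) + 1) := by
        have h1 : (μ - v₀) / D + 1 / 2 ≤ (k : ℝ) + 1 := by linarith
        have h2 : D * ((μ - v₀) / D + 1 / 2) ≤ D * ((k : ℝ) + 1) :=
          mul_le_mul_of_nonneg_left h1 hDpos.le
        have h3 : D * ((μ - v₀) / D) = μ - v₀ := by field_simp
        nlinarith
      have hck : D ^ 2 / 4 ≤ c (k + 1) := by
        have hcast : ((k + 1 : ℤ) : ℝ) = (k : ℝ) + 1 := by push_cast; ring
        simp only [hc, hcast]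
        nlinarith
      exact mul_le_mul (min_le_right _ _) hck (by positivity) ENNReal.toReal_nonneg
  have hminsum : Summable (fun k : ℤ => min (f k) (f (k + 1)) * (D ^ 2 / 4)) := by
    apply Summable.mul_right
    apply Summable.of_nonneg_of_le (fun k => le_min ENNReal.toReal_nonneg ENNReal.toReal_nonneg)
      (fun k => min_le_left _ _) hfsum
  have htsumle : ∑' k : ℤ, min (f k) (f (k + 1)) * (D ^ 2 / 4) ≤ ∑' k, f k * c k := by
    apply Summable.tsum_le_tsum_of_inj ι hιinj (fun k _ => hfcnn k) key hminsum hHS2.summable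
  have hfinal : ∑' k : ℤ, min (f k) (f (k + 1)) * (D ^ 2 / 4) ≤
      ProbabilityTheory.variance Y P := by
    calc ∑' k : ℤ, min (f k) (f (k + 1)) * (D ^ 2 / 4) ≤ ∑' k, f k * c k := htsumle
      _ = ∫ ω in ⋃ k, A k, g ω ∂P := hHS2.tsum_eq
      _ ≤ ProbabilityTheory.variance Y P := hle1
  have hrw : ∀ k : ℤ, min (P {ω | Y ω = v₀ + D * k}).toReal
      (P {ω | Y ω = v₀ + D * (k + 1)}).toReal = min (f k) (f (k + 1)) := by
    intro k
    have hcast : ((k + 1 : ℤ) : ℝ) = (k : ℝ) + 1 := by push_cast; ring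
    simp [hf, hA, hcast]
  rw [ge_iff_le]
  calc D ^ 2 / 4 * ∑' k : ℤ, min (P {ω | Y ω = v₀ + D * k}).toReal
        (P {ω | Y ω = v₀ + D * (k + 1)}).toReal
      = ∑' k : ℤ, min (f k) (f (k + 1)) * (D ^ 2 / 4) := by
        rw [tsum_mul_right]
        rw [mul_comm]
        congr 1
        exact tsum_congr hrw
    _ ≤ ProbabilityTheory.variance Y P := hfinal
end

section
/- Let X take values in the lattice {v₀ + Dk : k ∈ ℤ} with probabilities f(k) = P(X = v₀ + Dk), and let {τ_k}_{k∈ℤ} be nonnegative reals with τ_{k-1} + τ_k ≤ 2f(k) for all k and Σ_k τ_k = θ ∈ (0, 1]. Define a pair (V, ε) by P((V,ε) = (v₀+Dk, 1)) = τ_k and P((V,ε) = (v₀+Dk, 0)) = f(k) − (τ_{k-1}+τ_k)/2. If L is a Bernoulli(1/2) random variable independent of (V, ε), then Z = V + εDL has the same distribution as X. -/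
open MeasureTheory

theorem bernoulli_part_representation {Ω : Type*} [MeasurableSpace Ω] (P : Measure Ω)
    [IsProbabilityMeasure P] (V ε L : Ω → ℝ)
    (hV : Measurable V) (hε : Measurable ε) (hL : Measurable L)
    (v₀ D : ℝ) (hD : 0 < D) (f τ : ℤ → ℝ) (θ : ℝ) (hθ0 : 0 < θ) (hθ1 : θ ≤ 1)
    (hτ0 : ∀ k, 0 ≤ τ k) (hτf : ∀ k : ℤ, τ (k - 1) + τ k ≤ 2 * f k)
    (hτθ : ∑' k : ℤ, τ k = θ)
    (hεvals : ∀ ω, ε ω = 0 ∨ ε ω = 1)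
    (hLvals : ∀ ω, L ω = 0 ∨ L ω = 1)
    (hL0 : (P {ω | L ω = 0}).toReal = 1 / 2) (hL1 : (P {ω | L ω = 1}).toReal = 1 / 2)
    (hjoint1 : ∀ k : ℤ, (P {ω | V ω = v₀ + D * k ∧ ε ω = 1}).toReal = τ k)
    (hjoint0 : ∀ k : ℤ, (P {ω | V ω = v₀ + D * k ∧ ε ω = 0}).toReal
      = f k - (τ (k - 1) + τ k) / 2)
    (hindep : ProbabilityTheory.IndepFun (fun ω => (V ω, ε ω)) L P) :
    ∀ k : ℤ, (P {ω | V ω + ε ω * D * L ω = v₀ + D * k}).toReal = f k := by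
  intro k
  set x : ℝ := v₀ + D * k with hx
  have hVε : Measurable (fun ω => (V ω, ε ω)) := hV.prodMk hε
  set A : Set Ω := (fun ω => (V ω, ε ω)) ⁻¹' {(x, (0:ℝ))} with hAdef
  set B : Set Ω := (fun ω => (V ω, ε ω)) ⁻¹' {(x, (1:ℝ))} ∩ L ⁻¹' {(0:ℝ)} with hBdef
  set C : Set Ω := (fun ω => (V ω, ε ω)) ⁻¹' {(x - D, (1:ℝ))} ∩ L ⁻¹' {(1:ℝ)} with hCdef
  have hA : MeasurableSet A := hVε (measurableSet_singleton _)
  have hB : MeasurableSet B :=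
    (hVε (measurableSet_singleton _)).inter (hL (measurableSet_singleton _))
  have hC : MeasurableSet C :=
    (hVε (measurableSet_singleton _)).inter (hL (measurableSet_singleton _))
  have hset : {ω | V ω + ε ω * D * L ω = x} = A ∪ B ∪ C := by
    ext ω
    simp only [Set.mem_setOf_eq, hAdef, hBdef, hCdef, Set.mem_union, Set.mem_inter_iff,
      Set.mem_preimage, Set.mem_singleton_iff, Prod.ext_iff]
    rcases hεvals ω with h0 | h1 <;> rcases hLvals ω with l0 | l1
    · rw [h0, l0]; norm_num
    · rw [h0, l1]; norm_num
    · rw [h1, l0]; norm_num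
    · rw [h1, l1]; norm_num; constructor <;> intro h <;> linarith
  have hdAB : Disjoint A B := by
    rw [Set.disjoint_left]
    rintro ω hωA ⟨hωB, _⟩
    simp only [hAdef, Set.mem_preimage, Set.mem_singleton_iff, Prod.ext_iff] at hωA hωB
    have := hωA.2; have := hωB.2; norm_num at *; linarith
  have hdABC : Disjoint (A ∪ B) C := by
    rw [Set.disjoint_left]
    rintro ω hωAB ⟨hωC, hωL⟩
    simp only [Set.mem_preimage, Set.mem_singleton_iff] at hωL
    rcases hωAB with hωA | ⟨hωB, hωL'⟩
    · simp only [hAdef, Set.mem_preimage, Set.mem_singleton_iff, Prod.ext_iff] at hωA hωC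
      have := hωA.2; have := hωC.2; norm_num at *; linarith
    · simp only [Set.mem_preimage, Set.mem_singleton_iff] at hωL'
      norm_num [hωL'] at hωL
  have hmeas : P {ω | V ω + ε ω * D * L ω = x} = P A + P B + P C := by
    rw [hset, measure_union hdABC (by exact hC), measure_union hdAB hB]
  -- independence computations
  have hBmul : P B = P ((fun ω => (V ω, ε ω)) ⁻¹' {(x, (1:ℝ))}) * P (L ⁻¹' {(0:ℝ)}) :=
    hindep.measure_inter_preimage_eq_mul _ _ (measurableSet_singleton _) (measurableSet_singleton _)
  have hCmul : P C = P ((fun ω => (V ω, ε ω)) ⁻¹' {(x - D, (1:ℝ))}) * P (L ⁻¹' {(1:ℝ)}) :=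
    hindep.measure_inter_preimage_eq_mul _ _ (measurableSet_singleton _) (measurableSet_singleton _)
  have hsetA : A = {ω | V ω = v₀ + D * k ∧ ε ω = 0} := by
    ext ω; simp [hAdef, Prod.ext_iff, hx]
  have hsetB1 : (fun ω => (V ω, ε ω)) ⁻¹' {(x, (1:ℝ))} = {ω | V ω = v₀ + D * k ∧ ε ω = 1} := by
    ext ω; simp [Prod.ext_iff, hx]
  have hx' : x - D = v₀ + D * ((k - 1 : ℤ) : ℝ) := by push_cast [hx]; ring
  have hsetC1 : (fun ω => (V ω, ε ω)) ⁻¹' {(x - D, (1:ℝ))}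
      = {ω | V ω = v₀ + D * ((k - 1 : ℤ) : ℝ) ∧ ε ω = 1} := by
    ext ω; simp [Prod.ext_iff, hx']
  have hsetL0 : L ⁻¹' {(0:ℝ)} = {ω | L ω = 0} := rfl
  have hsetL1 : L ⁻¹' {(1:ℝ)} = {ω | L ω = 1} := rfl
  have hPA : (P A).toReal = f k - (τ (k - 1) + τ k) / 2 := by
    rw [hsetA]; exact hjoint0 k
  have hPB : (P B).toReal = τ k * (1 / 2) := by
    rw [hBmul, ENNReal.toReal_mul, hsetB1, hsetL0, hL0, hjoint1 k]
  have hPC : (P C).toReal = τ (k - 1) * (1 / 2) := by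
    rw [hCmul, ENNReal.toReal_mul, hsetC1, hsetL1, hL1, hjoint1 (k - 1)]
  have hfin : ∀ S : Set Ω, P S ≠ ⊤ := fun S => measure_ne_top P S
  rw [hmeas, ENNReal.toReal_add (by finiteness) (hfin C),
    ENNReal.toReal_add (hfin A) (hfin B), hPA, hPB, hPC]
  ring
end

section
/- Let (f_n)_{n≥1} be a sequence of nonnegative real numbers such that for each r > 1 the averages r^{−k}·Σ_{n ≤ r^k} f_n converge as k → ∞. Then the limit L is the same for each r > 1, and lim_{N→∞} N^{−1}·Σ_{n≤N} f_n = L. -/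
open Filter Finset Real

-- partial sum monotonicity
lemma avg_key_Smono (f : ℕ → ℝ) (hf : ∀ n, 0 ≤ f n) {a b : ℕ} (hab : a ≤ b) :
    ∑ n ∈ Finset.Icc 1 a, f n ≤ ∑ n ∈ Finset.Icc 1 b, f n :=
  Finset.sum_le_sum_of_subset_of_nonneg (Finset.Icc_subset_Icc_right hab)
    (fun n _ _ => hf n)

lemma avg_key (f : ℕ → ℝ) (hf : ∀ n, 0 ≤ f n)
    (h : ∀ r : ℝ, 1 < r → ∃ L : ℝ, Filter.Tendsto
      (fun k : ℕ => (r ^ k)⁻¹ * ∑ n ∈ Finset.Icc 1 ⌊r ^ k⌋₊, f n)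
      Filter.atTop (nhds L))
    (r : ℝ) (hr : 1 < r) (L : ℝ)
    (hL : Filter.Tendsto
      (fun k : ℕ => (r ^ k)⁻¹ * ∑ n ∈ Finset.Icc 1 ⌊r ^ k⌋₊, f n)
      Filter.atTop (nhds L)) :
    Filter.Tendsto (fun N : ℕ => (N : ℝ)⁻¹ * ∑ n ∈ Finset.Icc 1 N, f n)
      Filter.atTop (nhds L) := by
  have hr0 : (0:ℝ) < r := lt_trans zero_lt_one hr
  set s : ℕ → ℝ := fun m => r ^ (((2:ℝ)^m)⁻¹) with hs_def
  have hepos : ∀ m : ℕ, (0:ℝ) < ((2:ℝ)^m)⁻¹ := fun m => by positivity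
  have hs1 : ∀ m, 1 < s m := fun m =>
    (Real.one_lt_rpow_iff_of_pos hr0).mpr (Or.inl ⟨hr, hepos m⟩)
  have hpow : ∀ m : ℕ, (s m) ^ (2^m : ℕ) = r := by
    intro m
    rw [hs_def]
    rw [← Real.rpow_natCast (r ^ (((2:ℝ)^m)⁻¹)) (2^m), ← Real.rpow_mul hr0.le]
    push_cast
    rw [inv_mul_cancel₀ (by positivity), Real.rpow_one]
  -- each s m gives the same limit L
  have hlim : ∀ m, Filter.Tendsto
      (fun k : ℕ => ((s m) ^ k)⁻¹ * ∑ n ∈ Finset.Icc 1 ⌊(s m) ^ k⌋₊, f n)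
      Filter.atTop (nhds L) := by
    intro m
    obtain ⟨L', hL'⟩ := h (s m) (hs1 m)
    have hmono : Filter.Tendsto (fun j : ℕ => 2^m * j) atTop atTop :=
      Filter.tendsto_atTop_mono (fun j => Nat.le_mul_of_pos_left j (by positivity))
        tendsto_id
    have hsub := hL'.comp hmono
    have heq : (fun j : ℕ => ((s m) ^ (2^m * j))⁻¹ *
        ∑ n ∈ Finset.Icc 1 ⌊(s m) ^ (2^m * j)⌋₊, f n) =
        (fun j : ℕ => (r ^ j)⁻¹ * ∑ n ∈ Finset.Icc 1 ⌊r ^ j⌋₊, f n) := by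
      funext j
      have : (s m) ^ (2^m * j) = r ^ j := by rw [pow_mul, hpow m]
      rw [this]
    rw [Function.comp_def] at hsub
    rw [heq] at hsub
    have : L' = L := tendsto_nhds_unique hsub hL
    rwa [this] at hL'
  -- s m → 1
  have hs_to : Filter.Tendsto s atTop (nhds 1) := by
    have h2 : Filter.Tendsto (fun m : ℕ => (((2:ℝ)^m)⁻¹)) atTop (nhds 0) :=
      tendsto_inv_atTop_zero.comp (tendsto_pow_atTop_atTop_of_one_lt one_lt_two)
    have hc : ContinuousAt (fun x : ℝ => r ^ x) 0 :=
      Real.continuousAt_const_rpow hr0.ne'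
    have := hc.tendsto.comp h2
    simpa [Real.rpow_zero, Function.comp_def] using this
  -- main epsilon argument
  rw [Metric.tendsto_atTop]
  intro ε hε
  -- choose m with s m close enough to 1
  have hupper : ∀ᶠ m in atTop, s m * (L + ε/2) < L + ε := by
    have := (hs_to.mul_const (L + ε/2))
    rw [one_mul] at this
    exact this.eventually_lt_const (by linarith)
  have hlower : ∀ᶠ m in atTop, L - ε < (s m)⁻¹ * (L - ε/2) := by
    have := (hs_to.inv₀ one_ne_zero).mul_const (L - ε/2)
    rw [inv_one, one_mul] at this
    exact this.eventually_const_lt (by linarith)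
  obtain ⟨m, hm1, hm2⟩ := (hupper.and hlower).exists
  set t := s m with ht_def
  have ht1 : 1 < t := hs1 m
  have ht0 : (0:ℝ) < t := lt_trans zero_lt_one ht1
  obtain ⟨J, hJ⟩ := Metric.tendsto_atTop.mp (hlim m) (ε/2) (by positivity)
  obtain ⟨N₀, hN₀⟩ := exists_nat_ge (t ^ J)
  refine ⟨max N₀ 1, fun N hN => ?_⟩
  have hN1 : 1 ≤ N := le_trans (le_max_right _ _) hN
  have hNpos : (0:ℝ) < N := by exact_mod_cast hN1
  have hNs : t ^ J ≤ (N:ℝ) := le_trans hN₀ (by exact_mod_cast le_trans (le_max_left _ _) hN)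
  set k := ⌊Real.logb t N⌋₊ with hk_def
  have hlogb_nonneg : 0 ≤ Real.logb t N := Real.logb_nonneg ht1 (by exact_mod_cast hN1)
  have hk_le : t ^ k ≤ (N:ℝ) := by
    calc t ^ k = t ^ (k:ℝ) := (Real.rpow_natCast t k).symm
    _ ≤ t ^ Real.logb t N :=
        Real.rpow_le_rpow_of_exponent_le ht1.le (Nat.floor_le hlogb_nonneg)
    _ = N := Real.rpow_logb ht0 ht1.ne' hNpos
  have hk_lt : (N:ℝ) < t ^ (k+1) := by
    calc (N:ℝ) = t ^ Real.logb t N := (Real.rpow_logb ht0 ht1.ne' hNpos).symm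
    _ < t ^ ((k+1 : ℕ):ℝ) := by
        apply Real.rpow_lt_rpow_of_exponent_lt ht1
        push_cast
        exact Nat.lt_floor_add_one _
    _ = t ^ (k+1) := Real.rpow_natCast t (k+1)
  have hkJ : J ≤ k := by
    apply Nat.le_floor
    rw [Real.le_logb_iff_rpow_le ht1 hNpos, Real.rpow_natCast]
    exact hNs
  have hSnn : ∀ a : ℕ, 0 ≤ ∑ n ∈ Finset.Icc 1 a, f n :=
    fun a => Finset.sum_nonneg (fun n _ => hf n)
  have htk : (0:ℝ) < t ^ k := by positivity
  have htk1 : (0:ℝ) < t ^ (k+1) := by positivity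
  -- upper bound
  have hub := hJ (k+1) (by omega)
  have hlb := hJ k hkJ
  rw [Real.dist_eq, abs_lt] at hub hlb
  have hupperN : (N:ℝ)⁻¹ * ∑ n ∈ Finset.Icc 1 N, f n < L + ε := by
    have h1 : (N:ℝ)⁻¹ ≤ (t ^ k)⁻¹ := inv_anti₀ htk hk_le
    have h2 : ∑ n ∈ Finset.Icc 1 N, f n ≤ ∑ n ∈ Finset.Icc 1 ⌊t ^ (k+1)⌋₊, f n :=
      avg_key_Smono f hf (Nat.le_floor hk_lt.le)
    have h3 : (N:ℝ)⁻¹ * ∑ n ∈ Finset.Icc 1 N, f n ≤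
        (t ^ k)⁻¹ * ∑ n ∈ Finset.Icc 1 ⌊t ^ (k+1)⌋₊, f n :=
      mul_le_mul h1 h2 (hSnn _) (by positivity)
    have h4 : (t ^ k)⁻¹ * ∑ n ∈ Finset.Icc 1 ⌊t ^ (k+1)⌋₊, f n =
        t * ((t ^ (k+1))⁻¹ * ∑ n ∈ Finset.Icc 1 ⌊t ^ (k+1)⌋₊, f n) := by
      rw [← mul_assoc]
      congr 1
      field_simp
      ring
    have h5 : (t ^ (k+1))⁻¹ * ∑ n ∈ Finset.Icc 1 ⌊t ^ (k+1)⌋₊, f n < L + ε/2 := by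
      linarith [hub.2]
    calc (N:ℝ)⁻¹ * ∑ n ∈ Finset.Icc 1 N, f n
        ≤ t * ((t ^ (k+1))⁻¹ * ∑ n ∈ Finset.Icc 1 ⌊t ^ (k+1)⌋₊, f n) := by
          rw [← h4]; exact h3
      _ ≤ t * (L + ε/2) := by nlinarith [hSnn ⌊t ^ (k+1)⌋₊, inv_nonneg.mpr htk1.le]
      _ < L + ε := hm1
  have hlowerN : L - ε < (N:ℝ)⁻¹ * ∑ n ∈ Finset.Icc 1 N, f n := by
    have h1 : (t ^ (k+1))⁻¹ ≤ (N:ℝ)⁻¹ := inv_anti₀ hNpos hk_lt.le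
    have h2 : ∑ n ∈ Finset.Icc 1 ⌊t ^ k⌋₊, f n ≤ ∑ n ∈ Finset.Icc 1 N, f n := by
      apply avg_key_Smono f hf
      have := Nat.floor_le_floor hk_le
      rwa [Nat.floor_natCast] at this
    have h3 : (t ^ (k+1))⁻¹ * ∑ n ∈ Finset.Icc 1 ⌊t ^ k⌋₊, f n ≤
        (N:ℝ)⁻¹ * ∑ n ∈ Finset.Icc 1 N, f n :=
      mul_le_mul h1 h2 (hSnn _) (by positivity)
    have h4 : (t ^ (k+1))⁻¹ * ∑ n ∈ Finset.Icc 1 ⌊t ^ k⌋₊, f n =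
        t⁻¹ * ((t ^ k)⁻¹ * ∑ n ∈ Finset.Icc 1 ⌊t ^ k⌋₊, f n) := by
      rw [← mul_assoc]
      congr 1
      field_simp
      ring
    have h5 : L - ε/2 < (t ^ k)⁻¹ * ∑ n ∈ Finset.Icc 1 ⌊t ^ k⌋₊, f n := by
      linarith [hlb.1]
    calc L - ε < t⁻¹ * (L - ε/2) := hm2
      _ < t⁻¹ * ((t ^ k)⁻¹ * ∑ n ∈ Finset.Icc 1 ⌊t ^ k⌋₊, f n) := by
          apply mul_lt_mul_of_pos_left h5 (by positivity)
      _ = (t ^ (k+1))⁻¹ * ∑ n ∈ Finset.Icc 1 ⌊t ^ k⌋₊, f n := h4.symm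
      _ ≤ (N:ℝ)⁻¹ * ∑ n ∈ Finset.Icc 1 N, f n := h3
  rw [Real.dist_eq, abs_lt]
  constructor <;> linarith

theorem averages_along_geometric (f : ℕ → ℝ) (hf : ∀ n, 0 ≤ f n)
    (h : ∀ r : ℝ, 1 < r → ∃ L : ℝ, Filter.Tendsto
      (fun k : ℕ => (r ^ k)⁻¹ * ∑ n ∈ Finset.Icc 1 ⌊r ^ k⌋₊, f n)
      Filter.atTop (nhds L)) :
    ∃ L : ℝ, (∀ r : ℝ, 1 < r → Filter.Tendsto
      (fun k : ℕ => (r ^ k)⁻¹ * ∑ n ∈ Finset.Icc 1 ⌊r ^ k⌋₊, f n)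
      Filter.atTop (nhds L)) ∧
      Filter.Tendsto (fun N : ℕ => (N : ℝ)⁻¹ * ∑ n ∈ Finset.Icc 1 N, f n)
        Filter.atTop (nhds L) := by
  obtain ⟨L, hL⟩ := h 2 one_lt_two
  have hmain := avg_key f hf h 2 one_lt_two L hL
  refine ⟨L, fun r hr => ?_, hmain⟩
  obtain ⟨L', hL'⟩ := h r hr
  have := avg_key f hf h r hr L' hL'
  have hLL : L' = L := tendsto_nhds_unique this hmain
  rwa [hLL] at hL'
end

section
/- Suppose 0 < ϑ_j ≤ τ < 1 for all j, and let ν_n = Σ_{j=1}^n ϑ_j. Then for every M > 0 there is a constant C(τ, M) such that for all n > m ≥ 1, Π_{j=m+1}^n ϑ_j ≤ C(τ, M)/(ν_n − ν_m)^M. -/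
theorem prod_theta_bound (τ : ℝ) (hτ1 : τ < 1) (ϑ : ℕ → ℝ)
    (hϑ : ∀ j, 0 < ϑ j ∧ ϑ j ≤ τ)
    (ν : ℕ → ℝ) (hν : ∀ n, ν n = ∑ j ∈ Finset.Icc 1 n, ϑ j)
    (M : ℝ) (hM : 0 < M) :
    ∃ C : ℝ, 0 < C ∧ ∀ m n : ℕ, 1 ≤ m → m < n →
      ∏ j ∈ Finset.Icc (m + 1) n, ϑ j ≤ C / (ν n - ν m) ^ M := by
  have hτ0 : 0 < τ := lt_of_lt_of_le (hϑ 0).1 (hϑ 0).2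
  have hlogτ : Real.log τ < 0 := Real.log_neg hτ0 hτ1
  set c : ℝ := -Real.log τ / τ with hc_def
  have hc : 0 < c := div_pos (by linarith) hτ0
  -- pointwise bound
  have key : ∀ t : ℝ, 0 < t → t ≤ τ → t ≤ Real.exp (-c * t) := by
    intro t ht htτ
    have hlt : Real.log t ≤ Real.log τ := Real.log_le_log ht htτ
    have h1 : t * (-Real.log τ) ≤ τ * (-Real.log t) :=
      mul_le_mul htτ (by linarith) (by linarith) (le_of_lt hτ0)
    have h2 : Real.log t ≤ -c * t := by
      rw [hc_def]
      rw [show -(-Real.log τ / τ) * t = Real.log τ * t / τ by ring]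
      rw [le_div_iff₀ hτ0]
      nlinarith
    calc t = Real.exp (Real.log t) := (Real.exp_log ht).symm
      _ ≤ Real.exp (-c * t) := Real.exp_le_exp.mpr h2
  refine ⟨(M / c) ^ M * Real.exp (-M), by positivity, ?_⟩
  intro m n hm hmn
  set S := ν n - ν m with hS_def
  have hS : S = ∑ j ∈ Finset.Ioc m n, ϑ j := by
    rw [hS_def, hν, hν,
      show Finset.Icc 1 n = Finset.Ioc 0 n from Finset.Icc_add_one_left_eq_Ioc 0 n,
      show Finset.Icc 1 m = Finset.Ioc 0 m from Finset.Icc_add_one_left_eq_Ioc 0 m]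
    have := Finset.sum_Ioc_consecutive ϑ (Nat.zero_le m) (le_of_lt hmn)
    linarith
  have hIcc : Finset.Icc (m + 1) n = Finset.Ioc m n := Finset.Icc_add_one_left_eq_Ioc m n
  have hSpos : 0 < S := by
    rw [hS]
    apply Finset.sum_pos (fun j _ => (hϑ j).1)
    exact ⟨n, Finset.mem_Ioc.mpr ⟨hmn, le_refl n⟩⟩
  -- product bound
  have hprod : ∏ j ∈ Finset.Icc (m + 1) n, ϑ j ≤ Real.exp (-c * S) := by
    rw [hIcc]
    calc ∏ j ∈ Finset.Ioc m n, ϑ j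
        ≤ ∏ j ∈ Finset.Ioc m n, Real.exp (-c * ϑ j) :=
          Finset.prod_le_prod (fun j _ => le_of_lt (hϑ j).1)
            (fun j _ => key (ϑ j) (hϑ j).1 (hϑ j).2)
      _ = Real.exp (∑ j ∈ Finset.Ioc m n, -c * ϑ j) := (Real.exp_sum _ _).symm
      _ = Real.exp (-c * S) := by rw [hS, Finset.mul_sum]
  -- final bound: exp(-cS) ≤ C / S^M
  have hSM : (0:ℝ) < S ^ M := Real.rpow_pos_of_pos hSpos M
  rw [le_div_iff₀ hSM]
  refine le_trans (mul_le_mul_of_nonneg_right hprod (le_of_lt hSM)) ?_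
  -- exp(-cS) * S^M ≤ (M/c)^M * exp(-M)
  have hx : 0 < c * S := mul_pos hc hSpos
  have hlog : Real.log (c * S / M) ≤ c * S / M - 1 :=
    Real.log_le_sub_one_of_pos (div_pos hx hM)
  have h3 : (c * S / M) ^ M ≤ Real.exp (c * S - M) := by
    rw [← Real.exp_log (div_pos hx hM), ← Real.exp_mul, Real.exp_le_exp]
    calc Real.log (c * S / M) * M ≤ (c * S / M - 1) * M :=
          mul_le_mul_of_nonneg_right hlog (le_of_lt hM)
      _ = c * S - M := by field_simp
  have h4 : S ^ M = (M / c) ^ M * (c * S / M) ^ M := by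
    rw [← Real.mul_rpow (by positivity) (by positivity)]
    congr 1
    field_simp
  calc Real.exp (-c * S) * S ^ M
      = (M / c) ^ M * ((c * S / M) ^ M * Real.exp (-c * S)) := by rw [h4]; ring
    _ ≤ (M / c) ^ M * (Real.exp (c * S - M) * Real.exp (-c * S)) := by
        apply mul_le_mul_of_nonneg_left _ (by positivity)
        exact mul_le_mul_of_nonneg_right h3 (le_of_lt (Real.exp_pos _))
    _ = (M / c) ^ M * Real.exp (-M) := by
        rw [← Real.exp_add]; congr 2; ring
end
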